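/- Suppose the matrices M_1,…,M_r satisfy conditions (H0), (H1), (H2) and (H3*). Then they satisfy condition (H3): for every nonzero p ∈ ℤ^r there exists a word w ∈ W which is not p-periodic. -/

import Mathlib

open Matrix

variable {r : ℕ} {A : Type*}

/-- The `j`-th standard basis vector of `ℤ^r`. -/
def evec (r : ℕ) (j : Fin r) : Fin r → ℤ := fun i => if i = j then 1 else 0

/-- `w` represents a word of shape `m` (only its values on `[0,m]` matter):
`m ≥ 0` and the transition matrices are respected on the box `[0,m]`. -/
def IsWord (M : Fin r → Matrix A A ℤ) (m : Fin r → ℤ) (w : (Fin r → ℤ) → A) : Prop :=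
  0 ≤ m ∧ ∀ (l : Fin r → ℤ) (j : Fin r), 0 ≤ l → l + evec r j ≤ m →
    M j (w (l + evec r j)) (w l) = 1

/-- Two representing functions agree on the box `[0,m]`; this is equality of
words of shape `m`. -/
def AgreeOn (m : Fin r → ℤ) (w w' : (Fin r → ℤ) → A) : Prop :=
  ∀ l : Fin r → ℤ, 0 ≤ l → l ≤ m → w l = w' l

/-- The restriction `w|[k,k+n]`, as a word based at `0`: `(restrictW k w) i = w (i + k)`. -/
def restrictW (k : Fin r → ℤ) (w : (Fin r → ℤ) → A) : (Fin r → ℤ) → A :=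
  fun i => w (i + k)

/-- `w` (a word of shape `m`) is `p`-periodic: the translate `τ_p w`, given by
`(τ_p w)(x) = w (x - p)`, agrees with `w` on `[0,m] ∩ [p,p+m]`. -/
def IsPeriodic (p m : Fin r → ℤ) (w : (Fin r → ℤ) → A) : Prop :=
  ∀ x : Fin r → ℤ, 0 ≤ x → x ≤ m → p ≤ x → x ≤ p + m → w (x - p) = w x

/-- Condition (H0): each `M j` is nonzero. -/
def H0 (M : Fin r → Matrix A A ℤ) : Prop := ∀ j, M j ≠ 0

/-- Condition (H1): unique products of words. -/
def H1 (M : Fin r → Matrix A A ℤ) : Prop :=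
  ∀ (m n : Fin r → ℤ) (u v : (Fin r → ℤ) → A),
    IsWord M m u → IsWord M n v → u m = v 0 →
      (∃ w, IsWord M (m + n) w ∧ AgreeOn m w u ∧ AgreeOn n (restrictW m w) v) ∧
      (∀ w w', IsWord M (m + n) w → AgreeOn m w u → AgreeOn n (restrictW m w) v →
        IsWord M (m + n) w' → AgreeOn m w' u → AgreeOn n (restrictW m w') v →
        AgreeOn (m + n) w w')

/-- Condition (H2): the directed graph on `A` with an edge `a → b` whenever
`M i b a = 1` for some `i` is irreducible. -/
def H2 (M : Fin r → Matrix A A ℤ) : Prop :=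
  ∀ a b : A, Relation.ReflTransGen (fun x y => ∃ i, M i y x = 1) a b

/-- Condition (H3): for each nonzero `p ∈ ℤ^r` there is a non-`p`-periodic word. -/
def H3 (M : Fin r → Matrix A A ℤ) : Prop :=
  ∀ p : Fin r → ℤ, p ≠ 0 → ∃ (m : Fin r → ℤ) (w : (Fin r → ℤ) → A),
    IsWord M m w ∧ ¬ IsPeriodic p m w

/-- Condition (H1a): the matrices commute. -/
def H1a [Fintype A] (M : Fin r → Matrix A A ℤ) : Prop :=
  ∀ i j, M i * M j = M j * M i

/-- Condition (H1b): for `i < j`, the entries of `M i * M j` lie in `{0,1}`. -/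
def H1b [Fintype A] (M : Fin r → Matrix A A ℤ) : Prop :=
  ∀ i j, i < j → ∀ a b : A, (M i * M j) b a = 0 ∨ (M i * M j) b a = 1

/-- Condition (H1c): for `i < j < k`, the entries of `M i * M j * M k` lie in `{0,1}`. -/
def H1c [Fintype A] (M : Fin r → Matrix A A ℤ) : Prop :=
  ∀ i j k, i < j → j < k → ∀ a b : A,
    (M i * M j * M k) b a = 0 ∨ (M i * M j * M k) b a = 1

/-- Condition (H3*). -/
def H3star (M : Fin r → Matrix A A ℤ) : Prop :=
  ∀ (j : Fin r) (m : Fin r → ℤ), m j = 0 → ∀ w : (Fin r → ℤ) → A, IsWord M m w →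
    ∃ u u', IsWord M (m + evec r j) u ∧ IsWord M (m + evec r j) u' ∧
      AgreeOn m u w ∧ AgreeOn m u' w ∧ u (evec r j) ≠ u' (evec r j)

/-- `x` represents the product word `uv` of `u ∈ W_m` and `v ∈ W_n`. -/
def IsProd (M : Fin r → Matrix A A ℤ) (m n : Fin r → ℤ)
    (u v x : (Fin r → ℤ) → A) : Prop :=
  IsWord M (m + n) x ∧ AgreeOn m x u ∧ AgreeOn n (restrictW m x) v

section auxlemmas

variable {M : Fin r → Matrix A A ℤ}

private lemma le_app {x y : Fin r → ℤ} (h : x ≤ y) (i : Fin r) : x i ≤ y i := h i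

lemma evec_nonneg (j : Fin r) : (0 : Fin r → ℤ) ≤ evec r j := by
  intro i
  simp only [Pi.zero_apply, evec]
  split_ifs <;> omega

lemma isWord_mono {m n : Fin r → ℤ} {w : (Fin r → ℤ) → A} (hw : IsWord M m w)
    (hn : 0 ≤ n) (hnm : n ≤ m) : IsWord M n w :=
  ⟨hn, fun l j hl hle => hw.2 l j hl (hle.trans hnm)⟩

lemma isWord_restrict {m k n : Fin r → ℤ} {w : (Fin r → ℤ) → A} (hw : IsWord M m w)
    (hk : 0 ≤ k) (hn : 0 ≤ n) (hkn : k + n ≤ m) : IsWord M n (restrictW k w) := by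
  refine ⟨hn, fun l j hl hle => ?_⟩
  have key := hw.2 (l + k) j (add_nonneg hl hk) (by
    calc l + k + evec r j = (l + evec r j) + k := by ring
    _ ≤ n + k := add_le_add_left hle k
    _ = k + n := add_comm _ _
    _ ≤ m := hkn)
  have e : l + evec r j + k = l + k + evec r j := by ring
  simpa [restrictW, e] using key

lemma isWord_zero (a : A) : IsWord M 0 (fun _ => a) := by
  refine ⟨le_rfl, fun l j hl hle => ?_⟩
  exfalso
  have h1 := le_app hl j
  have h2 := le_app hle j
  simp only [Pi.add_apply, Pi.zero_apply, evec] at h1 h2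
  simp only [if_true] at h2
  omega

lemma exists_edge (h3s : H3star M) (j : Fin r) (a : A) :
    ∃ v : (Fin r → ℤ) → A, IsWord M (evec r j) v ∧ v 0 = a := by
  obtain ⟨u, u', hu, hu', hag, hag', hne⟩ := h3s j 0 rfl (fun _ => a) (isWord_zero a)
  refine ⟨u, ?_, ?_⟩
  · rwa [zero_add] at hu
  · exact hag 0 le_rfl le_rfl

lemma exists_word [Nonempty A] (h1 : H1 M) (h3s : H3star M) :
    ∀ m : Fin r → ℤ, 0 ≤ m → ∃ w, IsWord M m w := by
  suffices H : ∀ (N : ℕ) (m : Fin r → ℤ), 0 ≤ m → (∑ i, (m i).toNat) = N → ∃ w, IsWord M m w by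
    intro m hm; exact H _ m hm rfl
  intro N
  induction N using Nat.strong_induction_on with
  | _ N ih =>
    intro m hm hsum
    by_cases h : m = 0
    · subst h
      exact ⟨fun _ => Classical.arbitrary A, isWord_zero _⟩
    · obtain ⟨j, hj⟩ : ∃ j, 0 < m j := by
        by_contra hc
        push_neg at hc
        refine h (funext fun i => ?_)
        have h1 := le_app hm i
        have h2 := hc i
        simp only [Pi.zero_apply] at h1 ⊢
        omega
      have hm' : 0 ≤ m - evec r j := by
        intro i
        rcases eq_or_ne i j with hij | hij
        · subst hij
          simp only [Pi.sub_apply, Pi.zero_apply, evec, if_pos rfl, if_true]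
          omega
        · have h1 := le_app hm i
          simp only [Pi.zero_apply] at h1
          simp only [Pi.sub_apply, Pi.zero_apply, evec, if_neg hij]
          omega
      have hlt : (∑ i, ((m - evec r j) i).toNat) < N := by
        rw [← hsum]
        refine Finset.sum_lt_sum (fun i _ => ?_) ⟨j, Finset.mem_univ j, ?_⟩
        · rcases eq_or_ne i j with hij | hij
          · subst hij
            simp only [Pi.sub_apply, evec, if_pos rfl, if_true]
            omega
          · simp only [Pi.sub_apply, evec, if_neg hij]
            omega
        · simp only [Pi.sub_apply, evec, if_pos rfl, if_true]
          omega
      obtain ⟨u, hu⟩ := ih _ hlt (m - evec r j) hm' rfl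
      obtain ⟨v, hv, hv0⟩ := exists_edge h3s j (u (m - evec r j))
      obtain ⟨w, hw, _, _⟩ := (h1 (m - evec r j) (evec r j) u v hu hv hv0.symm).1
      have e : m - evec r j + evec r j = m := by ring
      rw [e] at hw
      exact ⟨w, hw⟩

/-- Branching above an arbitrary point of a slab, with full-slab agreement. -/
lemma branch (h1 : H1 M) (h3s : H3star M) {q c : Fin r → ℤ} {g : (Fin r → ℤ) → A} (j : Fin r)
    (hqj : q j = 0) (hq : 0 ≤ q) (hc0 : 0 ≤ c) (hcq : c ≤ q) (hg : IsWord M q g) :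
    ∃ h h', IsWord M (q + evec r j) h ∧ IsWord M (q + evec r j) h' ∧
      AgreeOn q h g ∧ AgreeOn q h' g ∧ h (c + evec r j) ≠ h' (c + evec r j) := by
  have hgc : IsWord M c g := isWord_mono hg hc0 hcq
  have hqc0 : (0 : Fin r → ℤ) ≤ q - c := by
    intro i
    have h2 := le_app hcq i
    simp only [Pi.sub_apply, Pi.zero_apply]
    omega
  have hg2 : IsWord M (q - c) (restrictW c g) :=
    isWord_restrict hg hc0 hqc0 (le_of_eq (by ring))
  have heq2 : g c = restrictW c g 0 := by simp [restrictW]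
  have esh2 : c + (q - c) = q := by ring
  have mk : ∀ u : (Fin r → ℤ) → A, IsWord M ((q - c) + evec r j) u →
      AgreeOn (q - c) u (restrictW c g) →
      ∃ h, IsWord M (q + evec r j) h ∧ AgreeOn q h g ∧ h (c + evec r j) = u (evec r j) := by
    intro u hu hagu
    have heq1 : g c = u 0 := by
      have h2 := hagu 0 le_rfl hqc0
      simp only [restrictW, zero_add] at h2
      exact h2.symm
    obtain ⟨h, hh, hhg, hhu⟩ := (h1 c ((q - c) + evec r j) g u hgc hu heq1).1
    have esh : c + ((q - c) + evec r j) = q + evec r j := by ring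
    rw [esh] at hh
    have hq' : IsWord M q h := isWord_mono hh hq (le_add_of_nonneg_right (evec_nonneg j))
    have uniq := (h1 c (q - c) g (restrictW c g) hgc hg2 heq2).2 h g
      (by rw [esh2]; exact hq')
      hhg
      (fun l hl hle => (hhu l hl (hle.trans (le_add_of_nonneg_right (evec_nonneg j)))).trans
        (hagu l hl hle))
      (by rw [esh2]; exact hg)
      (fun _ _ _ => rfl)
      (fun _ _ _ => rfl)
    rw [esh2] at uniq
    have hv : h (c + evec r j) = u (evec r j) := by
      have h3 := hhu (evec r j) (evec_nonneg j) (le_add_of_nonneg_left hqc0)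
      have e : c + evec r j = evec r j + c := add_comm _ _
      rw [e]
      simpa [restrictW] using h3
    exact ⟨h, hh, uniq, hv⟩
  have hqcj : (q - c) j = 0 := by
    have h2 := le_app hc0 j
    have h3 := le_app hcq j
    rw [hqj] at h3
    simp only [Pi.zero_apply] at h2
    simp only [Pi.sub_apply, hqj]
    omega
  obtain ⟨u, u', hu, hu', hagu, hagu', hne⟩ := h3s j (q - c) hqcj (restrictW c g) hg2
  obtain ⟨h, hh, hhg, hhv⟩ := mk u hu hagu
  obtain ⟨h', hh', hhg', hhv'⟩ := mk u' hu' hagu'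
  exact ⟨h, h', hh, hh', hhg, hhg', by rw [hhv, hhv']; exact hne⟩

lemma isPeriodic_neg {p m : Fin r → ℤ} {w : (Fin r → ℤ) → A}
    (h : IsPeriodic p m w) : IsPeriodic (-p) m w := by
  intro x hx0 hxm hpx hxpm
  have h1 := h (x + p)
    (by intro i; have h2 := le_app hpx i
        simp only [Pi.add_apply, Pi.neg_apply] at h2 ⊢
        simp only [Pi.zero_apply]; omega)
    (by intro i; have h2 := le_app hxpm i
        simp only [Pi.add_apply, Pi.neg_apply] at h2 ⊢; omega)
    (by intro i; have h2 := le_app hx0 i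
        simp only [Pi.add_apply, Pi.zero_apply] at h2 ⊢; omega)
    (by intro i; have h2 := le_app hxm i
        simp only [Pi.add_apply] at h2 ⊢; omega)
  have e1 : x + p - p = x := by ring
  have e2 : x - -p = x + p := by ring
  rw [e1] at h1
  rw [e2]
  exact h1.symm

lemma key_pos [Nonempty A] (h1 : H1 M) (h3s : H3star M) (p : Fin r → ℤ) (j : Fin r)
    (hpj : 0 < p j) :
    ∃ m w, IsWord M m w ∧ ¬ IsPeriodic p m w := by
  set pp : Fin r → ℤ := fun i => if 0 ≤ p i then p i else 0 with hppd
  set pm : Fin r → ℤ := fun i => if 0 ≤ p i then 0 else -p i with hpmd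
  set q : Fin r → ℤ := fun i => if i = j then 0 else pp i + pm i with hqd
  set c : Fin r → ℤ := fun i => if i = j then 0 else pp i with hcd
  set k0 : Fin r → ℤ := fun i => if i = j then p j - 1 else 0 with hk0d
  have hq : 0 ≤ q := by
    intro i
    simp only [hqd, hppd, hpmd, Pi.zero_apply]
    split_ifs <;> omega
  have hk00 : 0 ≤ k0 := by
    intro i
    simp only [hk0d, Pi.zero_apply]
    split_ifs <;> omega
  have hc0 : 0 ≤ c := by
    intro i
    simp only [hcd, hppd, Pi.zero_apply]
    split_ifs <;> omega
  have hcq : c ≤ q := by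
    intro i
    simp only [hcd, hqd, hppd, hpmd]
    split_ifs <;> omega
  have hqj : q j = 0 := by simp [hqd]
  have hb0 : (0 : Fin r → ℤ) ≤ q + k0 := by
    intro i
    have h2 := le_app hq i
    have h3 := le_app hk00 i
    simp only [Pi.zero_apply] at h2 h3
    simp only [Pi.add_apply, Pi.zero_apply]
    omega
  obtain ⟨B, hB⟩ := exists_word h1 h3s (q + k0) hb0
  have hg : IsWord M q (restrictW k0 B) :=
    isWord_restrict hB hk00 hq (le_of_eq (add_comm k0 q))
  obtain ⟨h, h', hh, hh', hag, hag', hne⟩ := branch h1 h3s j hqj hq hc0 hcq hg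
  have build : ∀ h : (Fin r → ℤ) → A, IsWord M (q + evec r j) h → AgreeOn q h (restrictW k0 B) →
      ∃ W, IsWord M ((q + k0) + evec r j) W ∧ W pm = B pm ∧ W pp = h (c + evec r j) := by
    intro h hh hag
    have hz : IsWord M (evec r j) (restrictW q h) :=
      isWord_restrict hh hq (evec_nonneg j) le_rfl
    have heqB : B (q + k0) = restrictW q h 0 := by
      have h2 := hag q hq le_rfl
      simp only [restrictW, zero_add]
      rw [h2]
      simp [restrictW]
    obtain ⟨W, hW, hWB, hWz⟩ := (h1 (q + k0) (evec r j) B (restrictW q h) hB hz heqB).1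
    have heqg : restrictW k0 B q = restrictW q h 0 := by
      have h2 := (hag q hq le_rfl).symm
      simpa [restrictW, zero_add] using h2
    have hWr : IsWord M (q + evec r j) (restrictW k0 W) :=
      isWord_restrict hW hk00 (add_nonneg hq (evec_nonneg j)) (le_of_eq (by ring))
    have hWq : AgreeOn q (restrictW k0 W) (restrictW k0 B) := fun l hl hle => by
      have h2 := hWB (l + k0) (add_nonneg hl hk00) (add_le_add_left hle k0)
      simpa [restrictW] using h2
    have hWe : AgreeOn (evec r j) (restrictW q (restrictW k0 W)) (restrictW q h) :=
      fun l hl hle => by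
        have h2 := hWz l hl hle
        have e : l + q + k0 = l + (q + k0) := by ring
        simpa [restrictW, e] using h2
    have hglue : AgreeOn (q + evec r j) (restrictW k0 W) h :=
      (h1 q (evec r j) (restrictW k0 B) (restrictW q h) hg hz heqg).2
        (restrictW k0 W) h hWr hWq hWe hh hag (fun _ _ _ => rfl)
    refine ⟨W, hW, ?_, ?_⟩
    · refine hWB pm ?_ ?_
      · intro i
        simp only [hpmd, Pi.zero_apply]
        split_ifs <;> omega
      · intro i
        rcases eq_or_ne i j with hij | hij
        · subst hij
          simp only [hpmd, hqd, hk0d, Pi.add_apply, if_pos rfl, if_true]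
          split_ifs <;> omega
        · simp only [hpmd, hqd, hcd, hppd, hk0d, Pi.add_apply, if_neg hij]
          split_ifs <;> omega
    · have h2 := hglue (c + evec r j) (add_nonneg hc0 (evec_nonneg j)) (add_le_add_left hcq _)
      have e : c + evec r j + k0 = pp := by
        funext i
        rcases eq_or_ne i j with hij | hij
        · subst hij
          simp only [hcd, hppd, hk0d, Pi.add_apply, evec, if_pos rfl, if_true]
          split_ifs <;> omega
        · simp only [hcd, hppd, hk0d, Pi.add_apply, evec, if_neg hij]
          split_ifs <;> omega
      rw [← e]
      simpa [restrictW] using h2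
  obtain ⟨W, hW, hWpm, hWpp⟩ := build h hh hag
  obtain ⟨W', hW', hWpm', hWpp'⟩ := build h' hh' hag'
  have hx0 : (0 : Fin r → ℤ) ≤ pp := by
    intro i
    simp only [hppd, Pi.zero_apply]
    split_ifs <;> omega
  have hxm : pp ≤ (q + k0) + evec r j := by
    intro i
    rcases eq_or_ne i j with hij | hij
    · subst hij
      simp only [hppd, hqd, hk0d, Pi.add_apply, evec, if_pos rfl, if_true]
      split_ifs <;> omega
    · simp only [hppd, hqd, hpmd, hk0d, Pi.add_apply, evec, if_neg hij]
      split_ifs <;> omega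
  have hpx : p ≤ pp := by
    intro i
    simp only [hppd]
    split_ifs <;> omega
  have hxpm : pp ≤ p + ((q + k0) + evec r j) := by
    intro i
    rcases eq_or_ne i j with hij | hij
    · subst hij
      simp only [hppd, hqd, hk0d, Pi.add_apply, evec, if_pos rfl, if_true]
      split_ifs <;> omega
    · simp only [hppd, hqd, hpmd, hk0d, Pi.add_apply, evec, if_neg hij]
      split_ifs <;> omega
  have hsub : pp - p = pm := by
    funext i
    simp only [hppd, hpmd, Pi.sub_apply]
    split_ifs <;> omega
  by_cases hper : IsPeriodic p ((q + k0) + evec r j) W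
  · refine ⟨(q + k0) + evec r j, W', hW', fun hper' => hne ?_⟩
    have e1 := hper pp hx0 hxm hpx hxpm
    have e2 := hper' pp hx0 hxm hpx hxpm
    rw [hsub] at e1 e2
    calc h (c + evec r j) = W pp := hWpp.symm
      _ = W pm := e1.symm
      _ = B pm := hWpm
      _ = W' pm := hWpm'.symm
      _ = W' pp := e2
      _ = h' (c + evec r j) := hWpp'
  · exact ⟨(q + k0) + evec r j, W, hW, hper⟩

end auxlemmas

/-- conditions (H0), (H1), (H2) and (H3*) imply condition (H3). -/
theorem stmt_11 [Fintype A] [Nonempty A] (hr : 0 < r)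
    (M : Fin r → Matrix A A ℤ)
    (hM : ∀ j (a b : A), M j b a = 0 ∨ M j b a = 1)
    (h0 : H0 M) (h1 : H1 M) (h2 : H2 M) (h3s : H3star M) :
    H3 M := by
  intro p hp
  obtain ⟨j, hj⟩ : ∃ j, p j ≠ 0 := by
    by_contra hc
    push_neg at hc
    exact hp (funext hc)
  rcases hj.lt_or_gt with hneg | hpos
  · obtain ⟨m, w, hw, hnp⟩ := key_pos h1 h3s (-p) j
      (show 0 < (-p) j by simp only [Pi.neg_apply]; omega)
    exact ⟨m, w, hw, fun hper => hnp (isPeriodic_neg hper)⟩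
  · exact key_pos h1 h3s p j hpos
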